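/- Let a, b, c, d ∈ ℂ with ad − bc ≠ 0 and let φ(z) = (az+b)/(cz+d) be a selfmap of 𝔻. Suppose φ is not an automorphism of 𝔻 (that is, φ(𝔻) ≠ 𝔻), that φ fixes a point ζ with |ζ| = 1 (cζ + d ≠ 0 and φ(ζ) = ζ), and that the derivative φ'(ζ) = (ad − bc)/(cζ + d)² equals a real number s with 0 < s < 1. Then the linear-fractional map φ∘σ⁻¹, given explicitly by Θ(z) = ((a·conj(d) + b·conj(b))·z + (a·conj(c) + b·conj(a))) / ((c·conj(d) + d·conj(b))·z + (c·conj(c) + d·conj(a))), fails to map 𝔻 into 𝔻: there exists z₀ ∈ 𝔻 such that either (c·conj(d) + d·conj(b))·z₀ + (c·conj(c) + d·conj(a)) = 0 or |Θ(z₀)| ≥ 1. -/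

import Mathlib

open ComplexConjugate

section LFTids
variable {a b c d ζ : ℂ} {s : ℝ}

lemma lft_R1 (ha : a = c*ζ + (s:ℂ)*(c*ζ+d)) (hb : b = ζ*((1-(s:ℂ))*(c*ζ+d) - c*ζ))
    (hac : conj a = conj c * conj ζ + (s:ℂ)*(conj c * conj ζ + conj d))
    (hbc : conj b = conj ζ*((1-(s:ℂ))*(conj c * conj ζ + conj d) - conj c * conj ζ))
    (hz1 : ζ * conj ζ = 1) :
    (a*conj d + b*conj b)*ζ + (a*conj c + b*conj a) = ζ*((c*conj d + d*conj b)*ζ + (c*conj c + d*conj a)) := by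
  linear_combination (1*(conj d)*ζ + 1*(conj c)) * ha + (1*(conj b)*ζ + 1*(conj a)) * hb + (-1*d*ζ*(s:ℂ) + -1*c*ζ^2*(s:ℂ)) * hac + (-1*d*ζ^2*(s:ℂ) + -1*c*ζ^3*(s:ℂ)) * hbc + (-1*d*(conj d)*ζ*(s:ℂ) + 1*d*(conj d)*ζ*(s:ℂ)^2 + -1*(conj c)*d*(s:ℂ) + 1*(conj c)*d*ζ*(conj ζ)*(s:ℂ)^2 + -1*c*(conj d)*ζ^2*(s:ℂ) + 1*c*(conj d)*ζ^2*(s:ℂ)^2 + -1*c*(conj c)*ζ*(s:ℂ) + 1*c*(conj c)*ζ^2*(conj ζ)*(s:ℂ)^2) * hz1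

lemma lft_Ez (ha : a = c*ζ + (s:ℂ)*(c*ζ+d)) (hb : b = ζ*((1-(s:ℂ))*(c*ζ+d) - c*ζ))
    (hac : conj a = conj c * conj ζ + (s:ℂ)*(conj c * conj ζ + conj d))
    (hbc : conj b = conj ζ*((1-(s:ℂ))*(conj c * conj ζ + conj d) - conj c * conj ζ))
    (hz1 : ζ * conj ζ = 1) :
    (c*conj d + d*conj b)*ζ + (c*conj c + d*conj a) = (c*ζ+d)*(conj c*conj ζ + conj d) := by
  linear_combination (1*d) * hac + (1*d*ζ) * hbc + (1*d*(conj d) + -1*d*(conj d)*(s:ℂ) + -1*(conj c)*d*(conj ζ)*(s:ℂ) + -1*c*(conj c)) * hz1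

lemma lft_CC (ha : a = c*ζ + (s:ℂ)*(c*ζ+d)) (hb : b = ζ*((1-(s:ℂ))*(c*ζ+d) - c*ζ))
    (hac : conj a = conj c * conj ζ + (s:ℂ)*(conj c * conj ζ + conj d))
    (hbc : conj b = conj ζ*((1-(s:ℂ))*(conj c * conj ζ + conj d) - conj c * conj ζ))
    (hz1 : ζ * conj ζ = 1) :
    (c*conj d + d*conj b)*(conj c*d + conj d*b) - (a*conj c + b*conj a)*(conj a*c + conj b*a) = (1-(s:ℂ))^2*(1+(s:ℂ))*((c*ζ+d)*(conj c*conj ζ + conj d))*((d*conj d - c*conj c) - (s:ℂ)*((c*ζ+d)*(conj c*conj ζ + conj d))) := by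
  linear_combination (-1*(conj b)*(conj c)*d*(s:ℂ) + -1*(conj b)*c*(conj c)*ζ + -1*(conj b)*c*(conj c)*ζ*(s:ℂ) + -1*(conj a)*c*(conj c) + -1*(conj a)*b*(conj b) + -1*a*(conj b)*(conj c)) * ha + (1*c*(conj d)^2 + 1*(conj b)*d*(conj d) + -1*(conj a)*(conj b)*d*(s:ℂ) + -1*(conj a)*(conj b)*c*ζ + -1*(conj a)*(conj b)*c*ζ*(s:ℂ) + -1*(conj a)^2*c) * hb + (-1*c*d*(conj d)*ζ*(s:ℂ) + 1*c*d*(conj d)*ζ*(s:ℂ)^2 + -1*c*(conj c)*d*(s:ℂ) + -1*c*(conj c)*d*ζ*(conj ζ) + 1*c*(conj c)*d*ζ*(conj ζ)*(s:ℂ)^2 + 1*c^2*(conj d)*ζ^2*(s:ℂ)^2 + -1*c^2*(conj c)*ζ + -1*c^2*(conj c)*ζ*(s:ℂ) + 1*c^2*(conj c)*ζ^2*(conj ζ)*(s:ℂ) + 1*c^2*(conj c)*ζ^2*(conj ζ)*(s:ℂ)^2 + -1*(conj b)*d^2*ζ*(s:ℂ) + 1*(conj b)*d^2*ζ*(s:ℂ)^2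 + -1*(conj b)*c*d*ζ^2 + 2*(conj b)*c*d*ζ^2*(s:ℂ)^2 + 1*(conj b)*c^2*ζ^3*(s:ℂ) + 1*(conj b)*c^2*ζ^3*(s:ℂ)^2 + -1*(conj a)*c*d*ζ + 1*(conj a)*c*d*ζ*(s:ℂ) + 1*(conj a)*c^2*ζ^2*(s:ℂ)) * hac + (1*d^2*(conj d)*ζ + -1*d^2*(conj d)*ζ*(s:ℂ) + -1*d^2*(conj d)*ζ*(s:ℂ)^2 + 1*d^2*(conj d)*ζ*(s:ℂ)^3 + 1*(conj c)*d^2 + -1*(conj c)*d^2*(s:ℂ)^2 + -1*(conj c)*d^2*ζ*(conj ζ)*(s:ℂ) + 1*(conj c)*d^2*ζ*(conj ζ)*(s:ℂ)^3 + -2*c*d*(conj d)*ζ^2*(s:ℂ) + 2*c*d*(conj d)*ζ^2*(s:ℂ)^3 + -2*c*(conj c)*d*ζ*(s:ℂ) + -2*c*(conj c)*d*ζ*(s:ℂ)^2 + -1*c*(conj c)*d*ζ^2*(conj ζ) + -1*c*(conj c)*d*ζ^2*(conj ζ)*(s:ℂ) + 2*c*(conj c)*d*ζ^2*(conj ζ)*(s:ℂ)^2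 + 2*c*(conj c)*d*ζ^2*(conj ζ)*(s:ℂ)^3 + 1*c^2*(conj d)*ζ^3*(s:ℂ)^2 + 1*c^2*(conj d)*ζ^3*(s:ℂ)^3 + -1*c^2*(conj c)*ζ^2 + -2*c^2*(conj c)*ζ^2*(s:ℂ) + -1*c^2*(conj c)*ζ^2*(s:ℂ)^2 + 1*c^2*(conj c)*ζ^3*(conj ζ)*(s:ℂ) + 2*c^2*(conj c)*ζ^3*(conj ζ)*(s:ℂ)^2 + 1*c^2*(conj c)*ζ^3*(conj ζ)*(s:ℂ)^3) * hbc + (1*d^2*(conj d)^2 + -2*d^2*(conj d)^2*(s:ℂ) + 2*d^2*(conj d)^2*(s:ℂ)^3 + -1*d^2*(conj d)^2*(s:ℂ)^4 + -2*(conj c)*d^2*(conj d)*(conj ζ)*(s:ℂ) + 2*(conj c)*d^2*(conj d)*(conj ζ)*(s:ℂ)^2 + 2*(conj c)*d^2*(conj d)*(conj ζ)*(s:ℂ)^3 + -2*(conj c)*d^2*(conj d)*(conj ζ)*(s:ℂ)^4 + 1*(conj c)^2*d^2*(conj ζ)^2*(s:ℂ)^2 + -1*(conj c)^2*d^2*(conj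 ζ)^2*(s:ℂ)^4 + -2*c*d*(conj d)^2*ζ*(s:ℂ) + 2*c*d*(conj d)^2*ζ*(s:ℂ)^2 + 2*c*d*(conj d)^2*ζ*(s:ℂ)^3 + -2*c*d*(conj d)^2*ζ*(s:ℂ)^4 + -2*c*(conj c)*d*(conj d) + 1*c*(conj c)*d*(conj d)*(s:ℂ) + 2*c*(conj c)*d*(conj d)*(s:ℂ)^2 + -1*c*(conj c)*d*(conj d)*(s:ℂ)^3 + -1*c*(conj c)*d*(conj d)*ζ*(conj ζ) + 5*c*(conj c)*d*(conj d)*ζ*(conj ζ)*(s:ℂ)^2 + -4*c*(conj c)*d*(conj d)*ζ*(conj ζ)*(s:ℂ)^4 + -1*c*(conj c)^2*d*(conj ζ) + 2*c*(conj c)^2*d*(conj ζ)*(s:ℂ) + 2*c*(conj c)^2*d*(conj ζ)*(s:ℂ)^2 + -1*c*(conj c)^2*d*(conj ζ)*(s:ℂ)^3 + 1*c*(conj c)^2*d*ζ*(conj ζ)^2*(s:ℂ) + 1*c*(conj c)^2*d*ζ*(conj ζ)^2*(s:ℂ)^2 + -2*c*(conj c)^2*d*ζ*(conj ζ)^2*(s:ℂ)^3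 + -2*c*(conj c)^2*d*ζ*(conj ζ)^2*(s:ℂ)^4 + 1*c^2*(conj d)^2*ζ^2*(s:ℂ)^2 + -1*c^2*(conj d)^2*ζ^2*(s:ℂ)^4 + -1*c^2*(conj c)*(conj d)*ζ + 2*c^2*(conj c)*(conj d)*ζ*(s:ℂ) + 2*c^2*(conj c)*(conj d)*ζ*(s:ℂ)^2 + -1*c^2*(conj c)*(conj d)*ζ*(s:ℂ)^3 + 1*c^2*(conj c)*(conj d)*ζ^2*(conj ζ)*(s:ℂ) + 1*c^2*(conj c)*(conj d)*ζ^2*(conj ζ)*(s:ℂ)^2 + -2*c^2*(conj c)*(conj d)*ζ^2*(conj ζ)*(s:ℂ)^3 + -2*c^2*(conj c)*(conj d)*ζ^2*(conj ζ)*(s:ℂ)^4 + 3*c^2*(conj c)^2*ζ*(conj ζ)*(s:ℂ) + 2*c^2*(conj c)^2*ζ*(conj ζ)*(s:ℂ)^2 + -1*c^2*(conj c)^2*ζ*(conj ζ)*(s:ℂ)^3 + -1*c^2*(conj c)^2*ζ^2*(conj ζ)^2*(s:ℂ)^2 + -2*c^2*(conj c)^2*ζ^2*(conj ζ)^2*(s:ℂ)^3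 + -1*c^2*(conj c)^2*ζ^2*(conj ζ)^2*(s:ℂ)^4) * hz1

lemma lft_X (ha : a = c*ζ + (s:ℂ)*(c*ζ+d)) (hb : b = ζ*((1-(s:ℂ))*(c*ζ+d) - c*ζ))
    (hac : conj a = conj c * conj ζ + (s:ℂ)*(conj c * conj ζ + conj d))
    (hbc : conj b = conj ζ*((1-(s:ℂ))*(conj c * conj ζ + conj d) - conj c * conj ζ))
    (hz1 : ζ * conj ζ = 1) :
    (d - c*ζ)*(conj d - conj c*conj ζ) - (b - a*ζ)*(conj b - conj a*conj ζ) = 4*(s:ℂ)*((d*conj d - c*conj c) - (s:ℂ)*((c*ζ+d)*(conj c*conj ζ + conj d))) := by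
  linear_combination (1*(conj b)*ζ + -1*(conj a)*ζ*(conj ζ)) * ha + (-1*(conj b) + 1*(conj a)*(conj ζ)) * hb + (1*d*ζ*(conj ζ) + -2*d*ζ*(conj ζ)*(s:ℂ) + -1*c*ζ^2*(conj ζ) + -2*c*ζ^2*(conj ζ)*(s:ℂ)) * hac + (-1*d*ζ + 2*d*ζ*(s:ℂ) + 1*c*ζ^2 + 2*c*ζ^2*(s:ℂ)) * hbc + (-1*d*(conj d) + 4*d*(conj d)*(s:ℂ) + -4*d*(conj d)*(s:ℂ)^2 + 1*(conj c)*d*(conj ζ) + -4*(conj c)*d*(conj ζ)*(s:ℂ)^2 + 1*c*(conj d)*ζ + -4*c*(conj d)*ζ*(s:ℂ)^2 + -4*c*(conj c)*(s:ℂ) + -1*c*(conj c)*ζ*(conj ζ) + -4*c*(conj c)*ζ*(conj ζ)*(s:ℂ) + -4*c*(conj c)*ζ*(conj ζ)*(s:ℂ)^2) * hz1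

lemma lft_I2 (ha : a = c*ζ + (s:ℂ)*(c*ζ+d)) (hb : b = ζ*((1-(s:ℂ))*(c*ζ+d) - c*ζ))
    (hac : conj a = conj c * conj ζ + (s:ℂ)*(conj c * conj ζ + conj d))
    (hbc : conj b = conj ζ*((1-(s:ℂ))*(conj c * conj ζ + conj d) - conj c * conj ζ))
    (hz1 : ζ * conj ζ = 1) :
    b*conj d - a*conj c = ζ*((d*conj d - c*conj c) - (s:ℂ)*((c*ζ+d)*(conj c*conj ζ + conj d))) := by
  linear_combination (-1*(conj c)) * ha + (1*(conj d)) * hb + (1*(conj c)*d*(s:ℂ) + 1*c*(conj c)*ζ*(s:ℂ)) * hz1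

lemma lft_det (ha : a = c*ζ + (s:ℂ)*(c*ζ+d)) (hb : b = ζ*((1-(s:ℂ))*(c*ζ+d) - c*ζ))
    (hac : conj a = conj c * conj ζ + (s:ℂ)*(conj c * conj ζ + conj d))
    (hbc : conj b = conj ζ*((1-(s:ℂ))*(conj c * conj ζ + conj d) - conj c * conj ζ))
    (hz1 : ζ * conj ζ = 1) :
    (a*conj d + b*conj b)*(c*conj c + d*conj a) - (a*conj c + b*conj a)*(c*conj d + d*conj b) = (s:ℂ)^2*((c*ζ+d)*(conj c*conj ζ + conj d))^2 := by
  linear_combination (-1*(conj b)*(conj c)*d + 1*(conj a)*d*(conj d)) * ha + (1*(conj b)*c*(conj c) + -1*(conj a)*c*(conj d)) * hb + (1*d^2*(conj d)*(s:ℂ) + 2*c*d*(conj d)*ζ*(s:ℂ) + 1*c^2*(conj d)*ζ^2*(s:ℂ)) * hac + (-1*(conj c)*d^2*(s:ℂ) + -2*c*(conj c)*d*ζ*(s:ℂ) + -1*c^2*(conj c)*ζ^2*(s:ℂ)) * hbc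

end LFTids
lemma key_aux (ζ η w : ℂ) (L : ℝ) (hz1 : ζ * conj ζ = 1)
    (hw : w * (1 - ζ * conj η) = (L:ℂ)) :
    Complex.normSq (w*ζ - η) - Complex.normSq (w - 1) = Complex.normSq η - 1 + 2*L := by
  have hwc : conj w * (1 - conj ζ * η) = (L:ℂ) := by
    have h := congrArg conj hw
    simpa [map_mul, map_sub, map_one, Complex.conj_conj, Complex.conj_ofReal] using h
  have hc : ((Complex.normSq (w*ζ - η) : ℝ) : ℂ) - ((Complex.normSq (w - 1) : ℝ) : ℂ)
      = ((Complex.normSq η : ℝ) : ℂ) - 1 + 2*(L:ℂ) := by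
    rw [← Complex.mul_conj, ← Complex.mul_conj, ← Complex.mul_conj]
    simp only [map_sub, map_mul, map_one, Complex.conj_conj]
    linear_combination (w*conj w)*hz1 + hw + hwc
  exact_mod_cast hc

set_option maxHeartbeats 4000000 in
/-- If `φ(z) = (az+b)/(cz+d)` is a nonautomorphic linear-fractional selfmap of the unit
disk of hyperbolic type (fixed point `ζ` on the unit circle with `φ'(ζ) = s ∈ (0,1)`),
then the linear-fractional map `φ ∘ σ⁻¹` (with the displayed coefficients) fails to map
the unit disk into itself. -/
theorem phi_comp_sigma_inv_not_selfmap_of_hyperbolic (a b c d ζ : ℂ) (s : ℝ)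
    (hdet : a * d - b * c ≠ 0)
    (hself : ∀ z : ℂ, ‖z‖ < 1 →
      c * z + d ≠ 0 ∧ ‖(a * z + b) / (c * z + d)‖ < 1)
    (hnotauto : {u : ℂ | ∃ z : ℂ, ‖z‖ < 1 ∧ u = (a * z + b) / (c * z + d)}
      ≠ {u : ℂ | ‖u‖ < 1})
    (hζ : ‖ζ‖ = 1) (hζden : c * ζ + d ≠ 0)
    (hfix : (a * ζ + b) / (c * ζ + d) = ζ)
    (hs0 : 0 < s) (hs1 : s < 1)
    (hderiv : (a * d - b * c) / (c * ζ + d) ^ 2 = (s : ℂ)) :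
    ∃ z₀ : ℂ, ‖z₀‖ < 1 ∧
      ((c * conj d + d * conj b) * z₀ + (c * conj c + d * conj a) = 0 ∨
        1 ≤ ‖(((a * conj d + b * conj b) * z₀ + (a * conj c + b * conj a)) /
          ((c * conj d + d * conj b) * z₀ + (c * conj c + d * conj a)))‖) := by
  have habs2 : ∀ u : ℂ, ‖u‖ < 1 ↔ Complex.normSq u < 1 := by
    intro u
    rw [← Complex.sq_norm]
    constructor
    · intro h; nlinarith [norm_nonneg u]
    · intro h; nlinarith [norm_nonneg u]
  have hzn : Complex.normSq ζ = 1 := by rw [Complex.normSq_eq_norm_sq, hζ]; norm_num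
  have hz1 : ζ * conj ζ = 1 := by rw [Complex.mul_conj, hzn, Complex.ofReal_one]
  have hζ0 : ζ ≠ 0 := by intro h; rw [h] at hζ; simp at hζ
  have hfe : a*ζ + b = ζ*(c*ζ+d) := by rwa [div_eq_iff hζden] at hfix
  have hDe : a*d - b*c = (s:ℂ)*(c*ζ+d)^2 := by rwa [div_eq_iff (pow_ne_zero 2 hζden)] at hderiv
  have ha : a = c*ζ + (s:ℂ)*(c*ζ+d) := by
    have h1 : (a - (c*ζ + (s:ℂ)*(c*ζ+d))) * (c*ζ+d) = 0 := by linear_combination c*hfe + hDe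
    rcases mul_eq_zero.mp h1 with h2 | h2
    · exact sub_eq_zero.mp h2
    · exact absurd h2 hζden
  have hb : b = ζ*((1-(s:ℂ))*(c*ζ+d) - c*ζ) := by linear_combination hfe - ζ*ha
  have hac : conj a = conj c * conj ζ + (s:ℂ)*(conj c * conj ζ + conj d) := by
    rw [ha]; simp only [map_add, map_mul, Complex.conj_ofReal]
  have hbc : conj b = conj ζ*((1-(s:ℂ))*(conj c * conj ζ + conj d) - conj c * conj ζ) := by
    rw [hb]; simp only [map_add, map_mul, map_sub, map_one, Complex.conj_ofReal]
  have hNq : (0:ℝ) < Complex.normSq (c*ζ+d) := Complex.normSq_pos.mpr hζden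
  set Nq := Complex.normSq (c*ζ+d) with hNqdef
  have hconjq : conj c * conj ζ + conj d = conj (c*ζ+d) := by simp [map_add, map_mul]
  have hqq : (c*ζ+d)*(conj c*conj ζ + conj d) = (Nq:ℂ) := by rw [hconjq, Complex.mul_conj]
  set Xr := Complex.normSq d - Complex.normSq c - s*Nq with hXrdef
  have hXc : (d*conj d - c*conj c) - (s:ℂ)*((c*ζ+d)*(conj c*conj ζ + conj d)) = (Xr:ℂ) := by
    rw [hqq, Complex.mul_conj, Complex.mul_conj, hXrdef]; push_cast; ring
  -- X ≥ 0 via the boundary point -ζ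
  have hX4 : Complex.normSq (d - c*ζ) - Complex.normSq (b - a*ζ) = 4*s*Xr := by
    have h := lft_X ha hb hac hbc hz1
    rw [hXc] at h
    have h2 : conj d - conj c * conj ζ = conj (d - c*ζ) := by simp [map_sub, map_mul]
    have h3 : conj b - conj a * conj ζ = conj (b - a*ζ) := by simp [map_sub, map_mul]
    rw [h2, h3, Complex.mul_conj, Complex.mul_conj] at h
    exact_mod_cast h
  have hXge : 0 ≤ Xr := by
    have hfc : Continuous (fun r : ℝ =>
        Complex.normSq (d - (r:ℂ)*(c*ζ)) - Complex.normSq (b - (r:ℂ)*(a*ζ))) := by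
      apply Continuous.sub <;> exact Complex.continuous_normSq.comp (by continuity)
    have h0 : 0 ≤ Complex.normSq (d - ((1:ℝ):ℂ)*(c*ζ)) - Complex.normSq (b - ((1:ℝ):ℂ)*(a*ζ)) := by
      apply ge_of_tendsto ((hfc.tendsto 1).mono_left
        (nhdsWithin_le_nhds : nhdsWithin (1:ℝ) (Set.Iio 1) ≤ nhds 1))
      filter_upwards [Ioo_mem_nhdsLT_of_mem
        (by constructor <;> norm_num : (1:ℝ) ∈ Set.Ioc (0:ℝ) 1)] with r hr
      have habsz : ‖-(r:ℂ)*ζ‖ < 1 := by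
        rw [show (-(r:ℂ)*ζ) = ((-r:ℝ):ℂ)*ζ by push_cast; ring]
        rw [norm_mul, Complex.norm_real, hζ, mul_one, norm_neg, Real.norm_eq_abs, abs_of_pos hr.1]
        exact hr.2
      obtain ⟨hden, hlt⟩ := hself (-(r:ℂ)*ζ) habsz
      have hd0 : 0 < ‖c*(-(r:ℂ)*ζ)+d‖ := norm_pos_iff.mpr hden
      rw [norm_div, div_lt_one hd0] at hlt
      have e1 : a*(-(r:ℂ)*ζ)+b = b - (r:ℂ)*(a*ζ) := by ring
      have e2 : c*(-(r:ℂ)*ζ)+d = d - (r:ℂ)*(c*ζ) := by ring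
      rw [e1, e2] at hlt
      rw [← Complex.sq_norm, ← Complex.sq_norm]
      nlinarith [norm_nonneg (b - (r:ℂ)*(a*ζ)), norm_nonneg (d - (r:ℂ)*(c*ζ))]
    have h1 : (0:ℝ) ≤ Complex.normSq (d - c*ζ) - Complex.normSq (b - a*ζ) := by
      simpa using h0
    nlinarith [hX4, hs0]
  -- X ≠ 0, else φ is onto the disk
  have hXne : Xr ≠ 0 := by
    intro hX0
    have hI2 := lft_I2 ha hb hac hbc hz1
    rw [hXc, hX0] at hI2
    simp only [Complex.ofReal_zero, mul_zero] at hI2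
    have hBD : b*conj d = a*conj c := by linear_combination hI2
    have hE : Complex.normSq d - Complex.normSq c = s*Nq := by
      rw [hXrdef] at hX0; linarith
    have hEpos : (0:ℝ) < Complex.normSq d - Complex.normSq c := by rw [hE]; positivity
    have hEc : ((Complex.normSq d - Complex.normSq c : ℝ):ℂ) = d*conj d - c*conj c := by
      push_cast
      rw [Complex.mul_conj, Complex.mul_conj]
    have haE : a*((Complex.normSq d - Complex.normSq c : ℝ):ℂ) = (a*d - b*c)*conj d := by
      rw [hEc]; linear_combination c*hBD
    have hbE : b*((Complex.normSq d - Complex.normSq c : ℝ):ℂ) = (a*d - b*c)*conj c := by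
      rw [hEc]; linear_combination d*hBD
    have hND : Complex.normSq (a*d - b*c) = s^2*Nq^2 := by
      have h := congrArg Complex.normSq hDe
      rw [Complex.normSq_mul, map_pow Complex.normSq, Complex.normSq_ofReal] at h
      rw [h]; ring
    apply hnotauto
    ext u
    simp only [Set.mem_setOf_eq]
    constructor
    · rintro ⟨zz, hzz, rfl⟩; exact (hself zz hzz).2
    · intro hu
      have hu2 : Complex.normSq u < 1 := (habs2 u).mp hu
      have hacu : a - c*u ≠ 0 := by
        intro h0
        have hau : a = c*u := by linear_combination h0
        by_cases hc0 : c = 0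
        · exact hdet (by rw [hau, hc0]; ring)
        · have hc0' : (0:ℝ) < Complex.normSq c := Complex.normSq_pos.mpr hc0
          have h1 : Complex.normSq a = Complex.normSq c * Complex.normSq u := by
            rw [hau, Complex.normSq_mul]
          have h2 := congrArg Complex.normSq haE
          rw [Complex.normSq_mul, Complex.normSq_mul, Complex.normSq_ofReal,
            Complex.normSq_conj, hND, hE] at h2
          have h3 : Complex.normSq a = Complex.normSq d := by
            have hp : (0:ℝ) < s^2*Nq^2 := by positivity
            have h4 : Complex.normSq a * (s^2*Nq^2) = Complex.normSq d * (s^2*Nq^2) := by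
              nlinarith [h2]
            exact mul_right_cancel₀ (ne_of_gt hp) h4
          nlinarith [mul_lt_mul_of_pos_left hu2 hc0']
      have hczd : c*((d*u - b)/(a - c*u)) + d = (a*d - b*c)/(a - c*u) := by
        field_simp; ring
      have hcznz : c*((d*u - b)/(a - c*u)) + d ≠ 0 := by
        rw [hczd]; exact div_ne_zero hdet hacu
      have hphiz : (a*((d*u - b)/(a - c*u))+b)/(c*((d*u - b)/(a - c*u))+d) = u := by
        rw [hczd, div_eq_iff (div_ne_zero hdet hacu), mul_div_assoc', div_add' _ _ _ hacu, mul_div_assoc', div_left_inj' hacu]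
        ring
      refine ⟨(d*u - b)/(a - c*u), ?_, hphiz.symm⟩
      · -- |z| < 1
        set z := (d*u - b)/(a - c*u) with hzdef
        have h4 : (a*z+b)*((Complex.normSq d - Complex.normSq c : ℝ):ℂ)
            = (a*d-b*c)*(conj d*z + conj c) := by linear_combination z*haE + hbE
        have h5 := congrArg Complex.normSq h4
        rw [Complex.normSq_mul, Complex.normSq_mul, Complex.normSq_ofReal, hND, hE] at h5
        have h6 : Complex.normSq (a*z+b) = Complex.normSq (conj d*z + conj c) := by
          have hp : (0:ℝ) < s^2*Nq^2 := by positivity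
          apply mul_right_cancel₀ (ne_of_gt hp)
          nlinarith [h5]
        have hcc1 : conj (c*z+d) = conj c*conj z + conj d := by simp [map_add, map_mul]
        have hcc2 : conj (conj d*z + conj c) = d*conj z + c := by simp [map_add, map_mul]
        have h7 : ((Complex.normSq (c*z+d) : ℝ):ℂ) - ((Complex.normSq (conj d*z + conj c) : ℝ):ℂ)
            = ((Complex.normSq d - Complex.normSq c : ℝ):ℂ)*(1 - ((Complex.normSq z : ℝ):ℂ)) := by
          rw [← Complex.mul_conj, ← Complex.mul_conj, ← Complex.mul_conj, hcc1, hcc2, hEc]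
          ring
        have h7r : Complex.normSq (c*z+d) - Complex.normSq (conj d*z + conj c)
            = (Complex.normSq d - Complex.normSq c)*(1 - Complex.normSq z) := by
          exact_mod_cast h7
        have h8 : Complex.normSq (a*z+b) < Complex.normSq (c*z+d) := by
          have hnsd : 0 < Complex.normSq (c*z+d) := Complex.normSq_pos.mpr hcznz
          have h9 : Complex.normSq u * Complex.normSq (c*z+d) = Complex.normSq (a*z+b) := by
            rw [← hphiz, Complex.normSq_div]
            rw [div_mul_cancel₀ _ (ne_of_gt hnsd)]
          nlinarith [h9, hnsd]
        rw [habs2]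
        nlinarith [h7r, h6, h8, hEpos]
  have hXpos : 0 < Xr := lt_of_le_of_ne hXge (Ne.symm hXne)
  -- main construction
  obtain ⟨A', hA'def⟩ : ∃ x, x = a*conj d + b*conj b := ⟨_, rfl⟩
  obtain ⟨B', hB'def⟩ : ∃ x, x = a*conj c + b*conj a := ⟨_, rfl⟩
  obtain ⟨C', hC'def⟩ : ∃ x, x = c*conj d + d*conj b := ⟨_, rfl⟩
  obtain ⟨D', hD'def⟩ : ∃ x, x = c*conj c + d*conj a := ⟨_, rfl⟩
  rw [← hA'def, ← hB'def, ← hC'def, ← hD'def]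
  have hR1 : A'*ζ + B' = ζ*(C'*ζ + D') := by
    rw [hA'def, hB'def, hC'def, hD'def]; exact lft_R1 ha hb hac hbc hz1
  have hEz : C'*ζ + D' = (Nq:ℂ) := by
    rw [hC'def, hD'def, ← hqq]; exact lft_Ez ha hb hac hbc hz1
  have hdet2 : A'*D' - B'*C' = ((s:ℂ)*(Nq:ℂ))^2 := by
    rw [hA'def, hB'def, hC'def, hD'def]
    have h := lft_det ha hb hac hbc hz1
    rw [hqq] at h
    rw [h]; ring
  have hcC : conj C' = conj c*d + conj d*b := by
    rw [hC'def]; simp only [map_add, map_mul, Complex.conj_conj]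
  have hcB : conj B' = conj a*c + conj b*a := by
    rw [hB'def]; simp only [map_add, map_mul, Complex.conj_conj]
  have hCCr : Complex.normSq C' - Complex.normSq B' = (1-s)^2*(1+s)*(Nq*Xr) := by
    have h := lft_CC ha hb hac hbc hz1
    rw [hXc, hqq] at h
    rw [← hB'def, ← hC'def, ← hcC, ← hcB] at h
    have hc2 : ((Complex.normSq C' : ℝ):ℂ) - ((Complex.normSq B' : ℝ):ℂ)
        = (((1-s)^2*(1+s)*(Nq*Xr) : ℝ):ℂ) := by
      rw [← Complex.mul_conj, ← Complex.mul_conj, h]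
      push_cast; ring
    exact_mod_cast hc2
  have h1s : (0:ℝ) < 1 - s := by linarith
  have h1p : (0:ℝ) < 1 + s := by linarith
  have hposCC : (0:ℝ) < (1-s)^2*(1+s)*(Nq*Xr) := by positivity
  have hnC : 0 < Complex.normSq C' := by nlinarith [Complex.normSq_nonneg B']
  have hC0 : C' ≠ 0 := by
    intro h; rw [h] at hnC; simp at hnC
  obtain ⟨η, hηdef⟩ : ∃ x, x = -B'/(C'*ζ) := ⟨_, rfl⟩
  have hηn : Complex.normSq η = Complex.normSq B' / Complex.normSq C' := by
    rw [hηdef, Complex.normSq_div, Complex.normSq_neg, Complex.normSq_mul, hzn, mul_one]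
  have ht1 : Complex.normSq η < 1 := by
    rw [hηn, div_lt_one hnC]; nlinarith
  have ht0 : 0 ≤ Complex.normSq η := Complex.normSq_nonneg η
  have hCηζ : C'*η*ζ = -B' := by
    rw [hηdef]; field_simp
    try ring
  have hNqc : (Nq:ℂ) ≠ 0 := Complex.ofReal_ne_zero.mpr (ne_of_gt hNq)
  have hη2den : C'*η + D' = (s:ℂ)^2*(Nq:ℂ) := by
    have h1 : (D'*ζ - B')*(C'*ζ + D') = (A'*D' - B'*C')*ζ := by
      linear_combination (-D')*hR1
    rw [hEz, hdet2] at h1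
    have h2 : D'*ζ - B' = (s:ℂ)^2*(Nq:ℂ)*ζ := by
      apply mul_right_cancel₀ hNqc
      linear_combination h1
    apply mul_right_cancel₀ hζ0
    linear_combination h2 + hCηζ
  have hA'eq : A' = C'*ζ + (s:ℂ)^2*(Nq:ℂ) := by
    apply mul_right_cancel₀ hζ0
    linear_combination hR1 + ζ*hη2den - hCηζ
  have hηval : A'*η + B' = η*((s:ℂ)^2*(Nq:ℂ)) := by
    linear_combination η*hA'eq + hCηζ
  obtain ⟨β, hβdef⟩ : ∃ x, x = 1 - ζ*conj η := ⟨_, rfl⟩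
  have hβ0 : β ≠ 0 := by
    intro h
    rw [hβdef] at h
    have h2 : (1:ℂ) = ζ*conj η := sub_eq_zero.mp h
    have h3 := congrArg Complex.normSq h2.symm
    rw [Complex.normSq_mul, hzn, Complex.normSq_conj, one_mul, Complex.normSq_one] at h3
    linarith
  have hnβ : 0 < Complex.normSq β := Complex.normSq_pos.mpr hβ0
  obtain ⟨g, hgdef⟩ : ∃ x : ℝ, x = (1 - Complex.normSq η)/2 := ⟨_, rfl⟩
  have hg : 0 < g := by rw [hgdef]; linarith
  have htg : Complex.normSq η = 1 - 2*g := by rw [hgdef]; ring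
  obtain ⟨lam, hlamdef⟩ : ∃ x : ℝ, x = (1+s^2)/2 := ⟨_, rfl⟩
  have hlam1 : lam < 1 := by rw [hlamdef]; nlinarith
  have hlam0 : 0 < lam := by rw [hlamdef]; nlinarith
  have hlams : s^2 < lam := by rw [hlamdef]; nlinarith
  obtain ⟨w, hwdef⟩ : ∃ x, x = ((lam*g/Complex.normSq β : ℝ) : ℂ)*conj β := ⟨_, rfl⟩
  have hwβ : w*β = ((lam*g : ℝ):ℂ) := by
    rw [hwdef, mul_assoc]
    have hcb : conj β * β = ((Complex.normSq β : ℝ):ℂ) := by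
      rw [mul_comm, Complex.mul_conj]
    rw [hcb, ← Complex.ofReal_mul]
    congr 1
    field_simp
  have hwβ' : w*(1 - ζ*conj η) = ((lam*g:ℝ):ℂ) := by rw [← hβdef]; exact hwβ
  have hw1 : w ≠ 1 := by
    intro h
    have hβval : β = ((lam*g:ℝ):ℂ) := by rw [← hwβ, h, one_mul]
    rw [hβdef] at hβval
    have h2 : ζ*conj η = ((1 - lam*g : ℝ):ℂ) := by
      push_cast at hβval ⊢
      linear_combination -hβval
    have h3 := congrArg Complex.normSq h2
    rw [Complex.normSq_mul, hzn, Complex.normSq_conj, one_mul, Complex.normSq_ofReal] at h3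
    nlinarith [hg, hlam1, hlam0, ht1, htg, h3, sq_nonneg (lam*g),
      mul_pos hg (by linarith : (0:ℝ) < 1 - lam)]
  have hwm1 : w - 1 ≠ 0 := sub_ne_zero.mpr hw1
  obtain ⟨z₀, hz₀def⟩ : ∃ x, x = (w*ζ - η)/(w - 1) := ⟨_, rfl⟩
  have hn1 : Complex.normSq (w*ζ - η) - Complex.normSq (w - 1)
      = Complex.normSq η - 1 + 2*(lam*g) := key_aux ζ η w (lam*g) hz1 hwβ'
  have hz₀abs : ‖z₀‖ < 1 := by
    rw [habs2, hz₀def, Complex.normSq_div, div_lt_one (Complex.normSq_pos.mpr hwm1)]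
    nlinarith [hn1, htg, mul_pos hg (by linarith : (0:ℝ) < 1 - lam)]
  refine ⟨z₀, hz₀abs, ?_⟩
  by_cases hCz₀ : C'*z₀ + D' = 0
  · exact Or.inl hCz₀
  · right
    have hs2c : ((s:ℂ))^2 ≠ 0 := pow_ne_zero 2 (Complex.ofReal_ne_zero.mpr (ne_of_gt hs0))
    have hzml : z₀*(w-1) = w*ζ - η := by rw [hz₀def, div_mul_cancel₀ _ hwm1]
    have hdenexp : (C'*z₀ + D')*(w - 1) = (Nq:ℂ)*(w - (s:ℂ)^2) := by
      have e0 : (C'*z₀ + D')*(w - 1) = C'*(w*ζ-η) + D'*(w-1) := by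
        rw [← hzml]; ring
      rw [e0]
      linear_combination w*hEz - hη2den
    have hws2 : w - (s:ℂ)^2 ≠ 0 := by
      intro h
      apply hCz₀
      have h2 : (C'*z₀ + D')*(w-1) = 0 := by rw [hdenexp, h, mul_zero]
      rcases mul_eq_zero.mp h2 with h3|h3
      · exact h3
      · exact absurd h3 hwm1
    obtain ⟨w₁, hw₁def⟩ : ∃ x, x = ((s:ℂ)^2)⁻¹*w := ⟨_, rfl⟩
    have hww₁ : w = (s:ℂ)^2*w₁ := by rw [hw₁def, ← mul_assoc, mul_inv_cancel₀ hs2c, one_mul]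
    have hw₁1 : w₁ - 1 ≠ 0 := by
      intro h
      apply hws2
      have h2 : w₁ = 1 := by linear_combination h
      rw [hww₁, h2, mul_one, sub_self]
    have hnumexp : (A'*z₀ + B')*(w - 1) = w*ζ*(Nq:ℂ) - η*((s:ℂ)^2*(Nq:ℂ)) := by
      have e0 : (A'*z₀ + B')*(w - 1) = A'*(w*ζ-η) + B'*(w-1) := by
        rw [← hzml]; ring
      rw [e0]
      linear_combination w*hR1 + w*ζ*hEz - hηval
    have hval : (A'*z₀ + B')/(C'*z₀ + D') = (w₁*ζ - η)/(w₁ - 1) := by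
      rw [div_eq_div_iff hCz₀ hw₁1]
      apply mul_right_cancel₀ hwm1
      linear_combination (w₁ - 1)*hnumexp - (w₁*ζ - η)*hdenexp
        + ((w₁-1)*ζ*(Nq:ℂ) - (w₁*ζ-η)*(Nq:ℂ))*hww₁
    rw [hval]
    have hw₁β : w₁*β = ((lam*g/s^2 : ℝ):ℂ) := by
      rw [hw₁def, mul_assoc, hwβ]
      push_cast
      field_simp
    have hw₁β' : w₁*(1 - ζ*conj η) = ((lam*g/s^2:ℝ):ℂ) := by rw [← hβdef]; exact hw₁β
    have hn2 : Complex.normSq (w₁*ζ - η) - Complex.normSq (w₁ - 1)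
        = Complex.normSq η - 1 + 2*(lam*g/s^2) := key_aux ζ η w₁ (lam*g/s^2) hz1 hw₁β'
    have hs2 : (0:ℝ) < s^2 := by positivity
    have hgelam : 1 < lam/s^2 := (one_lt_div hs2).mpr hlams
    have hposdiff : Complex.normSq (w₁ - 1) ≤ Complex.normSq (w₁*ζ - η) := by
      have e : Complex.normSq η - 1 + 2*(lam*g/s^2) = 2*(g*(lam/s^2 - 1)) := by
        rw [htg]; ring
      have hp := mul_pos hg (show (0:ℝ) < lam/s^2 - 1 by linarith)
      rw [e] at hn2
      linarith
    rw [norm_div, le_div_iff₀ (norm_pos_iff.mpr hw₁1), one_mul]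
    have hsq := Real.sqrt_le_sqrt hposdiff
    rwa [← Complex.norm_def, ← Complex.norm_def] at hsq
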